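/- Let f : ℝ → ℝ be continuously differentiable and strictly concave on [0,∞), bounded above, with f(0) = 0, and let r > 0, 0 < T̄ < T satisfy Assumption 1: f'(0)·T̄ > r·T. Let x̄⁰ > 0 be the unique positive solution of f(x) = r·x. Then there is a unique x₀ᶠ ∈ (0, x̄⁰) such that the solution of the closed-reactor dynamics x' = f(x) − r·x on (0,T̄), x' = −r·x on (T̄,T) with x(0) = x₀ᶠ satisfies x(T) = x₀ᶠ. Moreover, for any initial condition x₀ ∈ (0, x₀ᶠ) the corresponding solution satisfies x(T) > x₀, and for any x₀ > x₀ᶠ it satisfies x(T) < x₀. -/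

import Mathlib

open Set Filter Real

set_option maxHeartbeats 1000000 in
/-- Under Assumption 1 (`f'(0)·T̄ > r·T`), the closed-reactor day/night flow `X x₀`
has a unique positive fixed point `x₀ᶠ ∈ (0, x̄⁰)` over one period: `X x₀ᶠ T = x₀ᶠ`,
solutions starting below `x₀ᶠ` end the day above their starting point, and solutions
starting above `x₀ᶠ` end the day below it. -/
theorem closed_reactor_periodic_point
    (f : ℝ → ℝ) (r Tb T xbar0 : ℝ) (X : ℝ → ℝ → ℝ)
    (hdiff : ∀ y ∈ Set.Ici (0 : ℝ), DifferentiableAt ℝ f y)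
    (hderiv_cont : ContinuousOn (deriv f) (Set.Ici (0 : ℝ)))
    (hconc : StrictAntiOn (deriv f) (Set.Ici (0 : ℝ)))
    (hbdd : BddAbove (f '' Set.Ici (0 : ℝ)))
    (hf0 : f 0 = 0)
    (hr : 0 < r)
    (hTb : 0 < Tb) (hT : Tb < T)
    (hassum : r * T < deriv f 0 * Tb)
    (hxbar0_pos : 0 < xbar0)
    (hxbar0 : f xbar0 = r * xbar0)
    (hX_init : ∀ x₀ : ℝ, 0 < x₀ → X x₀ 0 = x₀)
    (hX_cont : ∀ x₀ : ℝ, 0 < x₀ → ContinuousOn (X x₀) (Set.Icc 0 T))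
    (hX_pos : ∀ x₀ : ℝ, 0 < x₀ → ∀ t ∈ Set.Icc (0 : ℝ) T, 0 < X x₀ t)
    (hX_day : ∀ x₀ : ℝ, 0 < x₀ →
      ∀ t ∈ Set.Ioo (0 : ℝ) Tb, HasDerivAt (X x₀) (f (X x₀ t) - r * X x₀ t) t)
    (hX_night : ∀ x₀ : ℝ, 0 < x₀ →
      ∀ t ∈ Set.Ioo Tb T, HasDerivAt (X x₀) (-(r * X x₀ t)) t) :
    ∃! x₀f : ℝ, (0 < x₀f ∧ x₀f < xbar0) ∧ X x₀f T = x₀f ∧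
      (∀ x₀ : ℝ, 0 < x₀ → x₀ < x₀f → x₀ < X x₀ T) ∧
      (∀ x₀ : ℝ, x₀f < x₀ → X x₀ T < x₀) := by
  have hT0 : 0 < T := hTb.trans hT
  have hL : 0 < deriv f 0 := by nlinarith
  -- continuity of f on [0,∞)
  have hfcont : ContinuousOn f (Set.Ici 0) :=
    fun y hy => (hdiff y hy).continuousAt.continuousWithinAt
  -- strict concavity
  have hconcave : StrictConcaveOn ℝ (Set.Ici 0) f :=
    StrictAntiOn.strictConcaveOn_of_deriv (convex_Ici 0) hfcont
      (by rw [interior_Ici]; exact hconc.mono Set.Ioi_subset_Ici_self)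
  -- strict monotonicity of x ↦ f x / x
  have hg_anti : ∀ p q : ℝ, 0 < p → p < q → f q / q < f p / p := by
    intro p q hp hpq
    have hq : 0 < q := hp.trans hpq
    have hpq' : p / q < 1 := (div_lt_one hq).mpr hpq
    have hpq0 : 0 < p / q := div_pos hp hq
    have key := hconcave.2 (Set.self_mem_Ici) (Set.mem_Ici.mpr hq.le) hq.ne
      (show (0:ℝ) < 1 - p / q by linarith) hpq0 (by ring)
    rw [hf0] at key
    simp only [smul_eq_mul, mul_zero, zero_add, mul_zero] at key
    have hpt : p / q * q = p := by field_simp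
    rw [hpt] at key
    rw [div_lt_div_iff₀ hq hp]
    calc f q * p = (p / q * f q) * q := by field_simp
      _ < f p * q := by
          have := mul_lt_mul_of_pos_right key hq
          linarith
  have hg_anti' : ∀ p q : ℝ, 0 < p → p ≤ q → f q / q ≤ f p / p := by
    intro p q hp hpq
    rcases eq_or_lt_of_le hpq with h | h
    · rw [h]
    · exact (hg_anti p q hp h).le
  -- f x / x tends to f'(0) as x → 0+
  have hg_lim : Filter.Tendsto (fun x => f x / x) (nhdsWithin 0 (Set.Ioi 0)) (nhds (deriv f 0)) := by
    have hd0 := (hdiff 0 Set.self_mem_Ici).hasDerivAt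
    have h1 := hasDerivAt_iff_tendsto_slope.mp hd0
    have h2 : Filter.Tendsto (slope f 0) (nhdsWithin 0 (Set.Ioi 0)) (nhds (deriv f 0)) :=
      h1.mono_left (nhdsWithin_mono 0 (fun x hx => Set.mem_compl_singleton_iff.mpr (ne_of_gt hx)))
    refine h2.congr fun x => ?_
    simp [slope_def_field, hf0]
  have hgleL : ∀ x : ℝ, 0 < x → f x / x ≤ deriv f 0 := by
    intro x hx
    refine ge_of_tendsto hg_lim ?_
    filter_upwards [Ioo_mem_nhdsGT_of_mem (Set.mem_Ico.mpr ⟨le_rfl, hx⟩)] with y hy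
    exact (hg_anti y x hy.1 hy.2).le
  have hflin : ∀ x : ℝ, 0 ≤ x → f x ≤ deriv f 0 * x := by
    intro x hx
    rcases eq_or_lt_of_le hx with h | h
    · rw [← h, hf0]; simp
    · have := hgleL x h
      rw [div_le_iff₀ h] at this
      linarith [this]
  have hfltr : ∀ x : ℝ, xbar0 < x → f x < r * x := by
    intro x hx
    have hx0 : 0 < x := hxbar0_pos.trans hx
    have h1 := hg_anti xbar0 x hxbar0_pos hx
    rw [hxbar0, mul_div_assoc, div_self hxbar0_pos.ne', mul_one] at h1
    rw [div_lt_iff₀ hx0] at h1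
    linarith
  -- restricted continuity / positivity on the day interval
  have hIccsub : Set.Icc (0:ℝ) Tb ⊆ Set.Icc 0 T := Set.Icc_subset_Icc le_rfl hT.le
  have hXc : ∀ x₀ : ℝ, 0 < x₀ → ContinuousOn (X x₀) (Set.Icc 0 Tb) :=
    fun x₀ hx₀ => (hX_cont x₀ hx₀).mono hIccsub
  have hXp : ∀ x₀ : ℝ, 0 < x₀ → ∀ t ∈ Set.Icc (0:ℝ) Tb, 0 < X x₀ t :=
    fun x₀ hx₀ t ht => hX_pos x₀ hx₀ t (hIccsub ht)
  -- night phase: explicit exponential decay over [Tb, T]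
  have hnight_formula : ∀ x₀ : ℝ, 0 < x₀ →
      X x₀ T = X x₀ Tb * Real.exp (-(r * (T - Tb))) := by
    intro x₀ hx₀
    set h : ℝ → ℝ := fun t => X x₀ t * Real.exp (r * t) with hh
    have hcont : ContinuousOn h (Set.Icc Tb T) :=
      ((hX_cont x₀ hx₀).mono (Set.Icc_subset_Icc hTb.le le_rfl)).mul
        ((Real.continuous_exp.comp (continuous_const.mul continuous_id)).continuousOn)
    have hderiv : ∀ t ∈ Set.Ioo Tb T, HasDerivAt h 0 t := by
      intro t ht
      have h1 := hX_night x₀ hx₀ t ht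
      have h2 : HasDerivAt (fun s => Real.exp (r * s)) (Real.exp (r * t) * r) t := by
        simpa using ((hasDerivAt_id t).const_mul r).exp
      have : HasDerivAt (fun y => X x₀ y * Real.exp (r * y)) _ t := h1.mul h2
      convert this using 1
      ring
    have hconst : ∀ s ∈ Set.Ioo Tb T, h T = h s := by
      intro s hs
      have := constant_of_has_deriv_right_zero (f := h) (a := s) (b := T)
        (hcont.mono (Set.Icc_subset_Icc hs.1.le le_rfl))
        (fun t ht => (hderiv t ⟨hs.1.trans_le ht.1, ht.2⟩).hasDerivWithinAt)
      exact this T ⟨hs.2.le, le_rfl⟩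
    have hnb : (nhdsWithin Tb (Set.Ioo Tb T)).NeBot := by
      apply mem_closure_iff_nhdsWithin_neBot.mp
      rw [closure_Ioo hT.ne]
      exact ⟨le_rfl, hT.le⟩
    have htend : Filter.Tendsto h (nhdsWithin Tb (Set.Ioo Tb T)) (nhds (h Tb)) := by
      have : ContinuousWithinAt h (Set.Icc Tb T) Tb := hcont Tb ⟨le_rfl, hT.le⟩
      exact (this.mono Set.Ioo_subset_Icc_self).tendsto
    have htend' : Filter.Tendsto h (nhdsWithin Tb (Set.Ioo Tb T)) (nhds (h T)) := by
      refine Filter.Tendsto.congr' ?_ tendsto_const_nhds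
      exact Filter.eventuallyEq_of_mem self_mem_nhdsWithin fun s hs => hconst s hs
    have heq : h T = h Tb := tendsto_nhds_unique htend' htend
    have heq' : X x₀ T * Real.exp (r * T) = X x₀ Tb * Real.exp (r * Tb) := heq
    have := mul_right_cancel₀ (Real.exp_ne_zero (r * T))
      (show X x₀ T * Real.exp (r * T)
          = X x₀ Tb * Real.exp (-(r * (T - Tb))) * Real.exp (r * T) by
        rw [heq', mul_assoc, ← Real.exp_add]; ring_nf)
    exact this
  -- day phase: upper bound X x₀ t ≤ x₀ exp(f'(0) t)
  have hday_ub : ∀ x₀ : ℝ, 0 < x₀ → ∀ t ∈ Set.Icc (0:ℝ) Tb,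
      X x₀ t ≤ x₀ * Real.exp (deriv f 0 * t) := by
    intro x₀ hx₀ t ht
    set L := deriv f 0 with hLdef
    set u : ℝ → ℝ := fun s => X x₀ s * Real.exp (-L * s) with hu
    have hucont : ContinuousOn u (Set.Icc 0 Tb) :=
      (hXc x₀ hx₀).mul ((Real.continuous_exp.comp (continuous_const.mul continuous_id)).continuousOn)
    have huderiv : ∀ s ∈ Set.Ioo (0:ℝ) Tb, HasDerivAt u
        ((f (X x₀ s) - r * X x₀ s) * Real.exp (-L * s)
          + X x₀ s * (Real.exp (-L * s) * (-L))) s := by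
      intro s hs
      have h2 : HasDerivAt (fun w => Real.exp (-L * w)) (Real.exp (-L * s) * (-L)) s := by
        simpa using ((hasDerivAt_id s).const_mul (-L)).exp
      exact (hX_day x₀ hx₀ s hs).mul h2
    have hanti : AntitoneOn u (Set.Icc 0 Tb) := by
      apply antitoneOn_of_deriv_nonpos (convex_Icc 0 Tb) hucont
      · intro s hs
        rw [interior_Icc] at hs
        exact ((huderiv s hs).differentiableAt).differentiableWithinAt
      · intro s hs
        rw [interior_Icc] at hs
        rw [(huderiv s hs).deriv]
        have hXps : 0 < X x₀ s := hXp x₀ hx₀ s ⟨hs.1.le, hs.2.le⟩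
        have h1 : f (X x₀ s) ≤ L * X x₀ s := hflin _ hXps.le
        have hexp : 0 < Real.exp (-L * s) := Real.exp_pos _
        have hrX : 0 < r * X x₀ s := mul_pos hr hXps
        nlinarith
    have h0 : u 0 = x₀ := by simp [hu, hX_init x₀ hx₀]
    have := hanti (Set.mem_Icc.mpr ⟨le_rfl, hTb.le⟩) ht ht.1
    rw [h0] at this
    have hexp : 0 < Real.exp (L * t) := Real.exp_pos _
    have := mul_le_mul_of_nonneg_right this hexp.le
    calc X x₀ t = X x₀ t * Real.exp (-L * t) * Real.exp (L * t) := by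
          rw [mul_assoc, ← Real.exp_add]; ring_nf; simp
      _ ≤ x₀ * Real.exp (L * t) := this
  -- day phase: lower bound for the log
  have hday_lb : ∀ x₀ : ℝ, 0 < x₀ →
      Real.log x₀ + (f (x₀ * Real.exp (deriv f 0 * Tb)) / (x₀ * Real.exp (deriv f 0 * Tb)) - r) * Tb
        ≤ Real.log (X x₀ Tb) := by
    intro x₀ hx₀
    set L := deriv f 0 with hLdef
    set c := x₀ * Real.exp (L * Tb) with hc
    have hcpos : 0 < c := mul_pos hx₀ (Real.exp_pos _)
    have hXlec : ∀ s ∈ Set.Icc (0:ℝ) Tb, X x₀ s ≤ c := by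
      intro s hs
      calc X x₀ s ≤ x₀ * Real.exp (L * s) := hday_ub x₀ hx₀ s hs
        _ ≤ c := by
            rw [hc]
            have : Real.exp (L * s) ≤ Real.exp (L * Tb) :=
              Real.exp_le_exp.mpr (by nlinarith [hs.2, hL])
            nlinarith
    set w : ℝ → ℝ := fun s => Real.log (X x₀ s) - (f c / c - r) * s with hw
    have hwderiv : ∀ s ∈ Set.Ioo (0:ℝ) Tb, HasDerivAt w
        ((X x₀ s)⁻¹ * (f (X x₀ s) - r * X x₀ s) - (f c / c - r)) s := by
      intro s hs
      have hXps : 0 < X x₀ s := hXp x₀ hx₀ s ⟨hs.1.le, hs.2.le⟩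
      have h1 : HasDerivAt (fun t => Real.log (X x₀ t)) ((X x₀ s)⁻¹ * (f (X x₀ s) - r * X x₀ s)) s :=
        (Real.hasDerivAt_log hXps.ne').comp s (hX_day x₀ hx₀ s hs)
      have h2 : HasDerivAt (fun t : ℝ => (f c / c - r) * t) (f c / c - r) s := by
        simpa using (hasDerivAt_id s).const_mul (f c / c - r)
      exact h1.sub h2
    have hwcont : ContinuousOn w (Set.Icc 0 Tb) := by
      apply ContinuousOn.sub
      · exact (hXc x₀ hx₀).log (fun s hs => (hXp x₀ hx₀ s hs).ne')
      · exact (continuous_const.mul continuous_id).continuousOn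
    have hmono : MonotoneOn w (Set.Icc 0 Tb) := by
      apply monotoneOn_of_deriv_nonneg (convex_Icc 0 Tb) hwcont
      · intro s hs
        rw [interior_Icc] at hs
        exact ((hwderiv s hs).differentiableAt).differentiableWithinAt
      · intro s hs
        rw [interior_Icc] at hs
        rw [(hwderiv s hs).deriv]
        have hXps : 0 < X x₀ s := hXp x₀ hx₀ s ⟨hs.1.le, hs.2.le⟩
        have h1 : f c / c ≤ f (X x₀ s) / X x₀ s :=
          hg_anti' (X x₀ s) c hXps (hXlec s ⟨hs.1.le, hs.2.le⟩)
        have h2 : (X x₀ s)⁻¹ * (f (X x₀ s) - r * X x₀ s) = f (X x₀ s) / X x₀ s - r := by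
          field_simp
        rw [h2]
        linarith
    have := hmono (Set.mem_Icc.mpr ⟨le_rfl, hTb.le⟩) (Set.mem_Icc.mpr ⟨hTb.le, le_rfl⟩) hTb.le
    simp only [hw, hX_init x₀ hx₀, mul_zero, sub_zero] at this
    linarith
  -- forward invariance: starting from xbar0, the day phase stays below xbar0
  have hxbar_ub : ∀ t ∈ Set.Icc (0:ℝ) Tb, X xbar0 t ≤ xbar0 := by
    by_contra hcon
    push_neg at hcon
    obtain ⟨t₁, ht₁, hgt⟩ := hcon
    set A := {t | t ∈ Set.Icc 0 t₁ ∧ X xbar0 t ≤ xbar0} with hA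
    have h0A : 0 ∈ A := ⟨⟨le_rfl, ht₁.1⟩, by rw [hX_init xbar0 hxbar0_pos]⟩
    have hclosed : IsClosed A := by
      have : A = Set.Icc 0 t₁ ∩ X xbar0 ⁻¹' Set.Iic xbar0 := rfl
      rw [this]
      apply ContinuousOn.preimage_isClosed_of_isClosed
        ((hX_cont xbar0 hxbar0_pos).mono (Set.Icc_subset_Icc le_rfl (ht₁.2.trans hT.le)))
        isClosed_Icc isClosed_Iic
    have hbddA : BddAbove A := ⟨t₁, fun x hx => hx.1.2⟩
    set τ := sSup A with hτ
    have hτA : τ ∈ A := hclosed.csSup_mem ⟨0, h0A⟩ hbddA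
    have hτ0 : 0 ≤ τ := hτA.1.1
    have hτt₁ : τ < t₁ := by
      rcases eq_or_lt_of_le hτA.1.2 with h | h
      · rw [h] at hτA; linarith [hτA.2]
      · exact h
    have hgt' : ∀ s ∈ Set.Ioc τ t₁, xbar0 < X xbar0 s := by
      intro s hs
      by_contra hle
      push_neg at hle
      have hsA : s ∈ A := ⟨⟨hτ0.trans hs.1.le, hs.2⟩, hle⟩
      exact absurd (le_csSup hbddA hsA) (not_le.mpr hs.1)
    have hanti : AntitoneOn (X xbar0) (Set.Icc τ t₁) := by
      apply antitoneOn_of_deriv_nonpos (convex_Icc τ t₁)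
        ((hX_cont xbar0 hxbar0_pos).mono
          (Set.Icc_subset_Icc hτ0 (ht₁.2.trans hT.le)))
      · intro s hs
        rw [interior_Icc] at hs
        have hs' : s ∈ Set.Ioo (0:ℝ) Tb := ⟨hτ0.trans_lt hs.1, hs.2.trans_le ht₁.2⟩
        exact ((hX_day xbar0 hxbar0_pos s hs').differentiableAt).differentiableWithinAt
      · intro s hs
        rw [interior_Icc] at hs
        have hs' : s ∈ Set.Ioo (0:ℝ) Tb := ⟨hτ0.trans_lt hs.1, hs.2.trans_le ht₁.2⟩
        rw [(hX_day xbar0 hxbar0_pos s hs').deriv]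
        have := hfltr (X xbar0 s) (hgt' s ⟨hs.1, hs.2.le⟩)
        linarith
    have := hanti (Set.mem_Icc.mpr ⟨le_rfl, hτt₁.le⟩) (Set.mem_Icc.mpr ⟨hτt₁.le, le_rfl⟩) hτt₁.le
    linarith [hτA.2]
  -- no crossing of distinct trajectories in the (open) day phase
  have hne : ∀ p q : ℝ, 0 < p → 0 < q → p ≠ q → ∀ t ∈ Set.Ioo (0:ℝ) Tb, X p t ≠ X q t := by
    intro p q hp hq hpq t ht heq
    -- compact bounds for both trajectories
    obtain ⟨sp, hsp, hminp⟩ := isCompact_Icc.exists_isMinOn (Set.nonempty_Icc.mpr hTb.le) (hXc p hp)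
    obtain ⟨sq, hsq, hminq⟩ := isCompact_Icc.exists_isMinOn (Set.nonempty_Icc.mpr hTb.le) (hXc q hq)
    obtain ⟨Sp, hSp, hmaxp⟩ := isCompact_Icc.exists_isMaxOn (Set.nonempty_Icc.mpr hTb.le) (hXc p hp)
    obtain ⟨Sq, hSq, hmaxq⟩ := isCompact_Icc.exists_isMaxOn (Set.nonempty_Icc.mpr hTb.le) (hXc q hq)
    set m := min (X p sp) (X q sq) with hm
    set M := max (X p Sp) (X q Sq) with hM
    have hm0 : 0 < m := lt_min (hXp p hp sp hsp) (hXp q hq sq hsq)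
    have hmemp : ∀ s ∈ Set.Icc (0:ℝ) Tb, X p s ∈ Set.Icc m M := fun s hs =>
      ⟨(min_le_left _ _).trans (hminp hs), (hmaxp hs).trans (le_max_left _ _)⟩
    have hmemq : ∀ s ∈ Set.Icc (0:ℝ) Tb, X q s ∈ Set.Icc m M := fun s hs =>
      ⟨(min_le_right _ _).trans (hminq hs), (hmaxq hs).trans (le_max_right _ _)⟩
    have hsubIci : Set.Icc m M ⊆ Set.Ici (0:ℝ) := fun x hx => hm0.le.trans hx.1
    -- Lipschitz constant for the day vector field on [m, M]
    have hFc : ContinuousOn (fun x => ‖deriv f x - r‖) (Set.Icc m M) :=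
      ((hderiv_cont.mono hsubIci).sub continuousOn_const).norm
    have hmM : m ≤ M := ((hmemp 0 ⟨le_rfl, hTb.le⟩).1).trans ((hmemp 0 ⟨le_rfl, hTb.le⟩).2)
    obtain ⟨x₁, hx₁, hmaxC⟩ := isCompact_Icc.exists_isMaxOn (Set.nonempty_Icc.mpr hmM) hFc
    set C := ‖deriv f x₁ - r‖ with hC
    set K : NNReal := ⟨max C 0, le_max_right _ _⟩ with hK
    have hFderiv : ∀ x ∈ Set.Icc m M, HasDerivAt (fun y => f y - r * y) (deriv f x - r) x := by
      intro x hx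
      exact ((hdiff x (hsubIci hx)).hasDerivAt).sub (by simpa using (hasDerivAt_id x).const_mul r)
    have hlip : LipschitzOnWith K (fun y => f y - r * y) (Set.Icc m M) := by
      apply Convex.lipschitzOnWith_of_nnnorm_hasDerivWithin_le (convex_Icc m M)
        (f' := fun x => deriv f x - r)
        (fun x hx => (hFderiv x hx).hasDerivWithinAt)
      intro x hx
      rw [← NNReal.coe_le_coe]
      simp only [coe_nnnorm, hK]
      exact le_max_of_le_left (hmaxC hx)
    have heqon := ODE_solution_unique_of_mem_Icc (v := fun _ x => f x - r * x)
      (s := fun _ => Set.Icc m M) (K := K) (fun _ _ => hlip) (t₀ := t) (a := 0) (b := Tb) ht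
      (hXc p hp) (fun s hs => hX_day p hp s hs) (fun s hs => hmemp s ⟨hs.1.le, hs.2.le⟩)
      (hXc q hq) (fun s hs => hX_day q hq s hs) (fun s hs => hmemq s ⟨hs.1.le, hs.2.le⟩) heq
    have h0 := heqon (Set.mem_Icc.mpr ⟨le_rfl, hTb.le⟩)
    rw [hX_init p hp, hX_init q hq] at h0
    exact hpq h0
  -- ordering of trajectories
  have hle : ∀ p q : ℝ, 0 < p → p < q → ∀ t ∈ Set.Icc (0:ℝ) Tb, X p t ≤ X q t := by
    intro p q hp hpq t ht
    have hq : 0 < q := hp.trans hpq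
    by_contra hlt'
    push_neg at hlt'
    have ht0 : t ≠ 0 := by
      intro h
      rw [h, hX_init p hp, hX_init q hq] at hlt'
      linarith
    have ht0' : 0 < t := lt_of_le_of_ne ht.1 (Ne.symm ht0)
    set d : ℝ → ℝ := fun s => X q s - X p s with hd
    have hdc : ContinuousOn d (Set.Icc 0 t) :=
      (((hXc q (hp.trans hpq)).mono (Set.Icc_subset_Icc le_rfl ht.2)).sub
        ((hXc p hp).mono (Set.Icc_subset_Icc le_rfl ht.2)))
    have h0mem : (0:ℝ) ∈ Set.Ioo (d t) (d 0) := by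
      constructor
      · simp only [hd]; linarith
      · simp only [hd, hX_init p hp, hX_init q hq]; linarith
    obtain ⟨s, hs, hds⟩ := intermediate_value_Ioo' ht0'.le hdc h0mem
    have hs' : s ∈ Set.Ioo (0:ℝ) Tb := ⟨hs.1, hs.2.trans_le ht.2⟩
    have : X p s = X q s := by simp only [hd] at hds; linarith
    exact hne p q hp (hp.trans hpq) hpq.ne s hs' this
  have hlt : ∀ p q : ℝ, 0 < p → p < q → ∀ t ∈ Set.Ioo (0:ℝ) Tb, X p t < X q t := by
    intro p q hp hpq t ht
    exact lt_of_le_of_ne (hle p q hp hpq t ⟨ht.1.le, ht.2.le⟩)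
      (hne p q hp (hp.trans hpq) hpq.ne t ht)
  -- strict contraction of log-differences over the day phase
  have hcontr : ∀ p q : ℝ, 0 < p → p < q →
      Real.log (X q Tb) - Real.log (X p Tb) < Real.log q - Real.log p := by
    intro p q hp hpq
    have hq : 0 < q := hp.trans hpq
    set ψ : ℝ → ℝ := fun s => Real.log (X q s) - Real.log (X p s) with hψ
    have hψc : ContinuousOn ψ (Set.Icc 0 Tb) :=
      ((hXc q hq).log (fun s hs => (hXp q hq s hs).ne')).sub
        ((hXc p hp).log (fun s hs => (hXp p hp s hs).ne'))
    have hψderiv : ∀ s ∈ Set.Ioo (0:ℝ) Tb, HasDerivAt ψ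
        ((X q s)⁻¹ * (f (X q s) - r * X q s) - (X p s)⁻¹ * (f (X p s) - r * X p s)) s := by
      intro s hs
      have hXpq : 0 < X q s := hXp q hq s ⟨hs.1.le, hs.2.le⟩
      have hXpp : 0 < X p s := hXp p hp s ⟨hs.1.le, hs.2.le⟩
      exact ((Real.hasDerivAt_log hXpq.ne').comp s (hX_day q hq s hs)).sub
        ((Real.hasDerivAt_log hXpp.ne').comp s (hX_day p hp s hs))
    have hψanti : StrictAntiOn ψ (Set.Icc 0 Tb) := by
      apply strictAntiOn_of_deriv_neg (convex_Icc 0 Tb) hψc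
      intro s hs
      rw [interior_Icc] at hs
      rw [(hψderiv s hs).deriv]
      have hXpq : 0 < X q s := hXp q hq s ⟨hs.1.le, hs.2.le⟩
      have hXpp : 0 < X p s := hXp p hp s ⟨hs.1.le, hs.2.le⟩
      have hpq' : X p s < X q s := hlt p q hp hpq s hs
      have h1 : f (X q s) / X q s < f (X p s) / X p s := hg_anti _ _ hXpp hpq'
      have e1 : (X q s)⁻¹ * (f (X q s) - r * X q s) = f (X q s) / X q s - r := by
        field_simp
      have e2 : (X p s)⁻¹ * (f (X p s) - r * X p s) = f (X p s) / X p s - r := by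
        field_simp
      rw [e1, e2]
      linarith
    have := hψanti (Set.mem_Icc.mpr ⟨le_rfl, hTb.le⟩) (Set.mem_Icc.mpr ⟨hTb.le, le_rfl⟩) hTb
    simpa [hψ, hX_init p hp, hX_init q hq] using this
  -- log of the full-period map
  have hlogT : ∀ p : ℝ, 0 < p →
      Real.log (X p T) = Real.log (X p Tb) - r * (T - Tb) := by
    intro p hp
    rw [hnight_formula p hp, Real.log_mul (hXp p hp Tb ⟨hTb.le, le_rfl⟩).ne'
      (Real.exp_ne_zero _), Real.log_exp]
    ring
  have hmono_T : ∀ p q : ℝ, 0 < p → p < q →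
      Real.log (X q T) - Real.log (X p T) < Real.log q - Real.log p := by
    intro p q hp hpq
    rw [hlogT p hp, hlogT q (hp.trans hpq)]
    have := hcontr p q hp hpq
    linarith
  have hle_T : ∀ p q : ℝ, 0 < p → p < q → X p T ≤ X q T := by
    intro p q hp hpq
    rw [hnight_formula p hp, hnight_formula q (hp.trans hpq)]
    exact mul_le_mul_of_nonneg_right (hle p q hp hpq Tb ⟨hTb.le, le_rfl⟩) (Real.exp_pos _).le
  have hXT_pos : ∀ p : ℝ, 0 < p → 0 < X p T :=
    fun p hp => hX_pos p hp T ⟨hT0.le, le_rfl⟩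
  have hratio : ∀ p q : ℝ, 0 < p → p < q → X q T ≤ X p T * q / p := by
    intro p q hp hpq
    have hq : 0 < q := hp.trans hpq
    have h1 := hmono_T p q hp hpq
    have h2 : Real.log (X q T) < Real.log (X p T * q / p) := by
      rw [Real.log_div (mul_pos (hXT_pos p hp) hq).ne' hp.ne',
        Real.log_mul (hXT_pos p hp).ne' hq.ne']
      linarith
    have hpos : 0 < X p T * q / p := by
      have := hXT_pos p hp
      positivity
    have := (Real.log_lt_log_iff (hXT_pos q hq) hpos).mp h2
    linarith
  -- continuity of the full-period map
  have hcontAt : ∀ c : ℝ, 0 < c → ContinuousAt (fun x => X x T) c := by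
    intro c hc
    apply continuousAt_of_locally_lipschitz (show (0:ℝ) < c / 2 by linarith) (2 * X c T / c)
    intro y hy
    rw [Real.dist_eq] at hy
    have hy1 : c / 2 < y := by cases abs_sub_lt_iff.mp hy; linarith
    have hy0 : 0 < y := by linarith
    rw [Real.dist_eq, Real.dist_eq]
    have hXcT := hXT_pos c hc
    rcases lt_trichotomy y c with h | h | h
    · have hord : X y T ≤ X c T := hle_T y c hy0 h
      have hr1 : X c T ≤ X y T * c / y := hratio y c hy0 h
      have hXyT := hXT_pos y hy0
      have hr1' : X c T * y ≤ X y T * c := by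
        rw [le_div_iff₀ hy0] at hr1
        linarith
      rw [abs_of_nonpos (by linarith), abs_of_nonpos (by linarith),
        div_mul_eq_mul_div, le_div_iff₀ hc]
      nlinarith [hr1', mul_pos hXcT (sub_pos.mpr h)]
    · simp [h]
    · have hord : X c T ≤ X y T := hle_T c y hc h
      have hr1 : X y T ≤ X c T * y / c := hratio c y hc h
      have hr1' : X y T * c ≤ X c T * y := by
        rw [le_div_iff₀ hc] at hr1
        linarith
      rw [abs_of_nonneg (by linarith), abs_of_nonneg (by linarith),
        div_mul_eq_mul_div, le_div_iff₀ hc]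
      nlinarith [hr1', mul_pos hXcT (sub_pos.mpr h)]
  -- choose a small starting point with growth over the period
  obtain ⟨δ, hδpos, hδ⟩ : ∃ δ : ℝ, 0 < δ ∧ ∀ y : ℝ, 0 < y → y < δ → r * T / Tb < f y / y := by
    have hLT : r * T / Tb < deriv f 0 := by rw [div_lt_iff₀ hTb]; linarith
    have hev : ∀ᶠ y in nhdsWithin 0 (Set.Ioi 0), r * T / Tb < f y / y :=
      hg_lim.eventually (eventually_gt_nhds hLT)
    obtain ⟨u, hu, hsub⟩ := mem_nhdsGT_iff_exists_Ioo_subset.mp hev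
    exact ⟨u, hu, fun y hy1 hy2 => hsub ⟨hy1, hy2⟩⟩
  set E := Real.exp (deriv f 0 * Tb) with hE
  have hEpos : 0 < E := Real.exp_pos _
  set aa := min (δ / (2 * E)) (xbar0 / 2) with haa
  have haa_pos : 0 < aa := lt_min (by positivity) (by positivity)
  have haa_xbar : aa < xbar0 := (min_le_right _ _).trans_lt (by linarith)
  have hcaδ : aa * E < δ := by
    have h1 : aa ≤ δ / (2 * E) := min_le_left _ _
    have : aa * E ≤ δ / (2 * E) * E := by nlinarith
    have h2 : δ / (2 * E) * E = δ / 2 := by field_simp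
    rw [h2] at this
    linarith
  have haaE_pos : 0 < aa * E := mul_pos haa_pos hEpos
  have hgrow : aa < X aa T := by
    have h1 := hday_lb aa haa_pos
    have h2 : r * T / Tb < f (aa * E) / (aa * E) := hδ (aa * E) haaE_pos hcaδ
    have h3 : r * T < f (aa * E) / (aa * E) * Tb := by
      rw [div_lt_iff₀ hTb] at h2
      linarith
    have h4 := hlogT aa haa_pos
    have h5 : Real.log aa < Real.log (X aa T) := by
      rw [h4]
      rw [hE] at h1
      nlinarith [h1, h3]
    exact (Real.log_lt_log_iff haa_pos (hXT_pos aa haa_pos)).mp h5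
  have hdecay : X xbar0 T < xbar0 := by
    rw [hnight_formula xbar0 hxbar0_pos]
    have h1 : X xbar0 Tb ≤ xbar0 := hxbar_ub Tb ⟨hTb.le, le_rfl⟩
    have h2 : Real.exp (-(r * (T - Tb))) < 1 := by
      rw [Real.exp_lt_one_iff]
      nlinarith
    have h3 : 0 < X xbar0 Tb := hXp xbar0 hxbar0_pos Tb ⟨hTb.le, le_rfl⟩
    nlinarith [Real.exp_pos (-(r * (T - Tb)))]
  -- intermediate value theorem gives the fixed point
  have hφcont : ContinuousOn (fun x => X x T - x) (Set.Icc aa xbar0) := fun x hx =>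
    (((hcontAt x (haa_pos.trans_le hx.1)).sub continuousAt_id)).continuousWithinAt
  have h0mem : (0:ℝ) ∈ Set.Ioo (X xbar0 T - xbar0) (X aa T - aa) := ⟨by linarith, by linarith⟩
  obtain ⟨x₀f, hx₀f_mem, hx₀f_eq⟩ := intermediate_value_Ioo' haa_xbar.le hφcont h0mem
  have hx₀f_pos : 0 < x₀f := haa_pos.trans hx₀f_mem.1
  have hfix : X x₀f T = x₀f := by
    have : X x₀f T - x₀f = 0 := hx₀f_eq
    linarith
  have hbelow : ∀ x₀ : ℝ, 0 < x₀ → x₀ < x₀f → x₀ < X x₀ T := by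
    intro x₀ h1 h2
    have h3 := hmono_T x₀ x₀f h1 h2
    rw [hfix] at h3
    have h4 : Real.log x₀ < Real.log (X x₀ T) := by linarith
    exact (Real.log_lt_log_iff h1 (hXT_pos x₀ h1)).mp h4
  have habove : ∀ x₀ : ℝ, x₀f < x₀ → X x₀ T < x₀ := by
    intro x₀ h2
    have h1 : 0 < x₀ := hx₀f_pos.trans h2
    have h3 := hmono_T x₀f x₀ hx₀f_pos h2
    rw [hfix] at h3
    have h4 : Real.log (X x₀ T) < Real.log x₀ := by linarith
    exact (Real.log_lt_log_iff (hXT_pos x₀ h1) h1).mp h4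
  refine ⟨x₀f, ⟨⟨hx₀f_pos, hx₀f_mem.2⟩, hfix, hbelow, habove⟩, ?_⟩
  rintro y ⟨⟨hy_pos, _⟩, hy_fix, _, _⟩
  rcases lt_trichotomy y x₀f with h | h | h
  · have := hbelow y hy_pos h
    rw [hy_fix] at this
    exact absurd this (lt_irrefl y)
  · exact h
  · have := habove y h
    rw [hy_fix] at this
    exact absurd this (lt_irrefl y)
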